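/- If T is an undirected tree with diameter d(T), then there is a labeling of T using labels from {1, 2, …, d(T)} (hence of age at most d(T)) that assigns at most 2 labels to every (directed version of every) edge and preserves every simple path of T in both directions; that is, τ(T, all paths, d(T)) ≤ 2. -/

import Mathlib

/-- `w` is a simple path of the digraph with edge relation `E`: a sequence of
`k + 1` distinct vertices joined by consecutive edges. -/
def IsPath {V : Type*} (E : V → V → Prop) {k : ℕ} (w : Fin (k + 1) → V) : Prop :=
  Function.Injective w ∧ ∀ i : Fin k, E (w i.castSucc) (w i.succ)

/-- The labeling `lab` preserves the path `w`: there is a strictly increasing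
choice of labels along the consecutive edges of `w`. -/
def Preserves {V : Type*} (lab : V → V → Finset ℕ) {k : ℕ} (w : Fin (k + 1) → V) : Prop :=
  ∃ l : Fin k → ℕ, StrictMono l ∧ ∀ i : Fin k, l i ∈ lab (w i.castSucc) (w i.succ)

/-- The labeling `lab` preserves every simple path of the digraph `E`
(the "all paths" property). -/
def PreservesAll {V : Type*} (E : V → V → Prop) (lab : V → V → Finset ℕ) : Prop :=
  ∀ (k : ℕ) (w : Fin (k + 1) → V), IsPath E w → Preserves lab w

/-! ### Auxiliary lemmas -/

/-- Extract a value-indexed adjacency statement from a path. -/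
lemma isPath_adj {V : Type*} {E : V → V → Prop} {k : ℕ} {w : Fin (k + 1) → V}
    (hw : IsPath E w) (a : ℕ) (ha : a < k) :
    E (w ⟨a, by omega⟩) (w ⟨a + 1, by omega⟩) := by
  have := hw.2 ⟨a, ha⟩
  simpa [Fin.castSucc_mk, Fin.succ_mk] using this

/-- Build a graph walk from a `Fin`-indexed path, with support `List.ofFn w`. -/
lemma exists_walk {V : Type*} (T : SimpleGraph V) :
    ∀ (k : ℕ) (w : Fin (k + 1) → V),
      (∀ a (ha : a < k), T.Adj (w ⟨a, by omega⟩) (w ⟨a + 1, by omega⟩)) →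
      ∃ p : T.Walk (w ⟨0, by omega⟩) (w ⟨k, by omega⟩), p.support = List.ofFn w := by
  intro k
  induction k with
  | zero =>
    intro w _
    exact ⟨SimpleGraph.Walk.nil, by simp [List.ofFn_succ]⟩
  | succ k ih =>
    intro w hadj
    set w' : Fin (k + 1) → V := fun i => w i.succ with hw'
    obtain ⟨p, hp⟩ := ih w' (fun a ha => by
      have := hadj (a + 1) (by omega)
      simpa [hw', Fin.succ_mk] using this)
    have h0 : w' ⟨0, by omega⟩ = w ⟨1, by omega⟩ := by
      simp [hw', Fin.succ_mk]
    have hk : w' ⟨k, by omega⟩ = w ⟨k + 1, by omega⟩ := by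
      simp [hw', Fin.succ_mk]
    refine ⟨SimpleGraph.Walk.cons (hadj 0 (by omega)) ((p.copy h0 hk)), ?_⟩
    rw [SimpleGraph.Walk.support_cons, SimpleGraph.Walk.support_copy, hp]
    rw [List.ofFn_succ (f := w)]
    congr 1

/-- In a tree, a path starting at a neighbour `z` of `v` which avoids `v`
also avoids any other neighbour `u` of `v`. -/
lemma avoid_lemma {V : Type*} {T : SimpleGraph V} (ht : T.IsTree)
    {u v z : V} (huv : T.Adj u v) (hvz : T.Adj v z) (hzu : z ≠ u)
    {n : ℕ} {P : Fin (n + 1) → V} (hP : IsPath T.Adj P) (hP0 : P 0 = z)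
    (hv : ∀ i, P i ≠ v) : ∀ i, P i ≠ u := by
  intro s hs
  -- s ≠ 0
  have hs0 : (s : ℕ) ≠ 0 := by
    intro h0
    apply hzu
    rw [← hP0, ← hs]
    congr 1
    exact Fin.ext h0.symm
  set t : ℕ := (s : ℕ) with htdef
  have ht1 : 1 ≤ t := by omega
  have htn : t < n + 1 := s.isLt
  -- the prefix of P up to s
  set Q : Fin (t + 1) → V := fun j => P ⟨(j : ℕ), by omega⟩ with hQ
  have hQadj : ∀ a (ha : a < t), T.Adj (Q ⟨a, by omega⟩) (Q ⟨a + 1, by omega⟩) := by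
    intro a ha
    exact isPath_adj hP a (by omega)
  obtain ⟨p, hsupp⟩ := exists_walk T t Q hQadj
  have hQ0 : Q ⟨0, by omega⟩ = z := by
    rw [← hP0]
    all_goals exact congrArg P (Fin.ext (by simp))
  have hQt : Q ⟨t, by omega⟩ = u := by
    rw [← hs]
  -- two distinct paths from z to u
  obtain ⟨-, huniq⟩ := SimpleGraph.isTree_iff_existsUnique_path.1 ht
  obtain ⟨q₀, -, hq⟩ := huniq z u
  have hzv : z ≠ v := by rw [← hP0]; exact hv 0
  have hvu : v ≠ u := huv.ne'
  have hzu' : z ≠ u := hzu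
  -- path z - v - u
  have q1 : T.Walk z u := SimpleGraph.Walk.cons hvz.symm (SimpleGraph.Walk.cons huv.symm SimpleGraph.Walk.nil)
  have hq1 : (SimpleGraph.Walk.cons hvz.symm (SimpleGraph.Walk.cons huv.symm SimpleGraph.Walk.nil) : T.Walk z u).IsPath := by
    simp [SimpleGraph.Walk.isPath_def, hzv, hvu, hzu']
  -- path along Q
  have hq2path : (p.copy hQ0 hQt).IsPath := by
    rw [SimpleGraph.Walk.isPath_def, SimpleGraph.Walk.support_copy, hsupp, List.nodup_ofFn]
    intro a b hab
    have hab' : P ⟨(a : ℕ), by omega⟩ = P ⟨(b : ℕ), by omega⟩ := hab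
    have := hP.1 hab'
    exact Fin.ext (by simpa using congrArg Fin.val this)
  have e1 := hq _ hq1
  have e2 := hq _ hq2path
  have : (SimpleGraph.Walk.cons hvz.symm (SimpleGraph.Walk.cons huv.symm SimpleGraph.Walk.nil) : T.Walk z u) = p.copy hQ0 hQt := by
    rw [e1, e2]
  have hvmem : v ∈ (p.copy hQ0 hQt).support := by
    rw [← this]; simp
  rw [SimpleGraph.Walk.support_copy, hsupp, List.mem_ofFn] at hvmem
  obtain ⟨j, hj⟩ := hvmem
  exact hv _ hj

/-- Prepend a vertex to a `Fin`-path. -/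
lemma prepend_path {V : Type*} {E : V → V → Prop} [Std.Symm E] {n : ℕ}
    {P : Fin (n + 1) → V} (hP : IsPath E P) (u : V)
    (hadj : E u (P 0)) (hu : ∀ i, P i ≠ u) :
    ∃ Q : Fin (n + 2) → V, IsPath E Q ∧ Q 0 = u ∧ ∀ j : Fin (n + 2), Q j = u ∨ ∃ i, Q j = P i := by
  refine ⟨fun j => if h : (j : ℕ) = 0 then u else P ⟨(j : ℕ) - 1, by omega⟩, ⟨?_, ?_⟩, by simp, ?_⟩
  · intro a b hab
    simp only at hab
    split_ifs at hab with h1 h2 h2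
    · exact Fin.ext (by omega)
    · exact absurd hab.symm (hu _)
    · exact absurd hab (hu _)
    · have := hP.1 hab
      have := congrArg Fin.val this
      simp only at this
      exact Fin.ext (by omega)
  · intro i
    simp only [Fin.coe_castSucc, Fin.val_succ]
    rcases Nat.eq_zero_or_pos (i : ℕ) with h0 | hpos
    · rw [dif_pos h0, dif_neg (by omega)]
      have : P ⟨(i : ℕ) + 1 - 1, by omega⟩ = P 0 := by
        congr 1; exact Fin.ext (by simp [h0])
      rw [this]; exact hadj
    · rw [dif_neg (by omega), dif_neg (by omega)]
      have hstep := isPath_adj hP ((i : ℕ) - 1) (by omega)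
      have heq : P ⟨(i : ℕ) + 1 - 1, by omega⟩ = P ⟨((i : ℕ) - 1) + 1, by omega⟩ := by
        congr 1
        exact Fin.ext (by simp; omega)
      rw [heq]
      exact hstep
  · intro j
    by_cases h : (j : ℕ) = 0
    · left; simp [h]
    · right
      refine ⟨⟨(j : ℕ) - 1, by omega⟩, ?_⟩
      simp [h]

theorem tree_temporality_all_paths_age_diameter_le_two {V : Type*} [Fintype V]
    (T : SimpleGraph V) (ht : T.IsTree) (d : ℕ)
    (hd : IsGreatest {k | ∃ w : Fin (k + 1) → V, IsPath T.Adj w} d) :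
    ∃ lab : V → V → Finset ℕ,
      (∀ u v, ∀ t ∈ lab u v, 1 ≤ t ∧ t ≤ d) ∧
      (∀ u v, T.Adj u v → (lab u v).card ≤ 2) ∧
      PreservesAll T.Adj lab := by
  classical
  have hsymm : Std.Symm T.Adj := ⟨fun _ _ h => h.symm⟩
  -- S u v : lengths of paths starting at v avoiding u
  set S : V → V → Set ℕ := fun u v =>
    {n : ℕ | ∃ w : Fin (n + 1) → V, IsPath T.Adj w ∧ w 0 = v ∧ ∀ i, w i ≠ u} with hS
  have hbdd : ∀ u v, BddAbove (S u v) := by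
    intro u v
    exact ⟨d, fun n ⟨w, hw, _, _⟩ => hd.2 ⟨w, hw⟩⟩
  have hne : ∀ u v, u ≠ v → (S u v).Nonempty := by
    intro u v huv
    refine ⟨0, fun _ => v, ⟨fun a b _ => Fin.ext (by omega), fun i => i.elim0⟩, rfl,
      fun _ => huv.symm⟩
  set h : V → V → ℕ := fun u v => sSup (S u v) with hh
  -- existence of witness
  have hwit : ∀ u v, u ≠ v → h u v ∈ S u v := fun u v huv =>
    Nat.sSup_mem (hne u v huv) (hbdd u v)
  -- key bound : for adjacent u v, h u v + 1 ≤ d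
  have hboundd : ∀ u v, T.Adj u v → h u v + 1 ≤ d := by
    intro u v huv
    obtain ⟨w, hw, hw0, hwu⟩ := hwit u v huv.ne
    obtain ⟨Q, hQ, -, -⟩ := prepend_path hw u (by rw [hw0]; exact huv) hwu
    exact hd.2 ⟨Q, hQ⟩
  -- key decrease : h v z + 1 ≤ h u v
  have hdec : ∀ u v z, T.Adj u v → T.Adj v z → z ≠ u → h v z + 1 ≤ h u v := by
    intro u v z huv hvz hzu
    obtain ⟨P, hP, hP0, hPv⟩ := hwit v z hvz.ne
    have hPu : ∀ i, P i ≠ u := avoid_lemma ht huv hvz hzu hP hP0 hPv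
    obtain ⟨Q, hQ, hQ0, hQmem⟩ := prepend_path hP v (by rw [hP0]; exact hvz) hPv
    have hQu : ∀ j, Q j ≠ u := by
      intro j
      rcases hQmem j with h1 | ⟨i, h2⟩
      · rw [h1]; exact huv.ne'
      · rw [h2]; exact hPu i
    exact le_csSup (hbdd u v) ⟨Q, hQ, hQ0, hQu⟩
  refine ⟨fun u v => if T.Adj u v then {d - h u v} else ∅, ?_, ?_, ?_⟩
  · intro u v t htmem
    by_cases hadj : T.Adj u v
    · simp only [hadj, if_true, Finset.mem_singleton] at htmem
      have := hboundd u v hadj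
      omega
    · simp [hadj] at htmem
  · intro u v hadj
    simp [hadj]
  · intro k w hw
    refine ⟨fun i => d - h (w i.castSucc) (w i.succ), ?_, ?_⟩
    · cases k with
      | zero => intro a; exact a.elim0
      | succ m =>
        rw [Fin.strictMono_iff_lt_succ]
        intro i
        have heq : (i.castSucc.succ : Fin (m + 2)) = i.succ.castSucc := by
          exact Fin.ext (by simp)
        have hab : T.Adj (w i.castSucc.castSucc) (w i.castSucc.succ) := hw.2 i.castSucc
        have hbc : T.Adj (w i.succ.castSucc) (w i.succ.succ) := hw.2 i.succ
        have hab' : T.Adj (w i.castSucc.castSucc) (w i.succ.castSucc) := by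
          rwa [heq] at hab
        have hca : w i.succ.succ ≠ w i.castSucc.castSucc := by
          intro hcontr
          have := hw.1 hcontr
          have := congrArg Fin.val this
          simp at this
          omega
        have h1 := hdec _ _ _ hab' hbc hca
        have h2 := hboundd _ _ hab'
        have h3 : h (w i.castSucc.castSucc) (w i.castSucc.succ)
            = h (w i.castSucc.castSucc) (w i.succ.castSucc) := by rw [heq]
        omega
    · intro i
      simp [hw.2 i]
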